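/- Let G be a graph with burning number k = b(G) that admits an optimal burning sequence (v_1, ..., v_k) in which v_k is a redundant source (i.e., some neighbor of v_k is already burned in round k−1, equivalently the balls N_{k−l}[v_l] for l = 1,...,k−1 already cover V(G)). Then for all n ∈ ℕ, b(G ⊠ K_n) = b(G). -/

import Mathlib

/-- Zero forcing closure: vertices eventually colored blue. -/
inductive SimpleGraph.Forced {V : Type*} (G : SimpleGraph V) (B : Set V) : V → Prop
  | init (v : V) (hv : v ∈ B) : SimpleGraph.Forced G B v
  | force (v w : V) (hv : SimpleGraph.Forced G B v) (hadj : G.Adj v w)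
      (hall : ∀ u, G.Adj v u → u ≠ w → SimpleGraph.Forced G B u) : SimpleGraph.Forced G B w

def SimpleGraph.IsZeroForcingSet {V : Type*} (G : SimpleGraph V) (B : Set V) : Prop :=
  ∀ v, G.Forced B v

noncomputable def SimpleGraph.zeroForcingNumber {V : Type*} (G : SimpleGraph V) : ℕ :=
  sInf {n | ∃ B : Set V, B.ncard = n ∧ G.IsZeroForcingSet B}

/-- closed ball of radius r -/
def SimpleGraph.closedBall {V : Type*} (G : SimpleGraph V) (v : V) (r : ℕ) : Set V :=
  {w | G.edist v w ≤ (r : ℕ∞)}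

/-- Burning sequence (alternative characterization). -/
def SimpleGraph.IsBurningSeq {V : Type*} (G : SimpleGraph V) {k : ℕ} (s : Fin k → V) : Prop :=
  (∀ i j : Fin k, i ≠ j →
      ((((i : ℕ) : ℤ) - ((j : ℕ) : ℤ)).natAbs : ℕ∞) ≤ G.edist (s i) (s j)) ∧
  (⋃ l : Fin k, G.closedBall (s l) (k - 1 - (l : ℕ))) = Set.univ

noncomputable def SimpleGraph.burningNumber {V : Type*} (G : SimpleGraph V) : ℕ :=
  sInf {k | ∃ s : Fin k → V, G.IsBurningSeq s}

/-- Strong product of graphs. -/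
def SimpleGraph.strongProd {α β : Type*} (G : SimpleGraph α) (H : SimpleGraph β) :
    SimpleGraph (α × β) where
  Adj x y := (x.1 = y.1 ∧ H.Adj x.2 y.2) ∨ (x.2 = y.2 ∧ G.Adj x.1 y.1) ∨
    (G.Adj x.1 y.1 ∧ H.Adj x.2 y.2)
  symm := by
    refine ⟨?_⟩
    rintro ⟨a, b⟩ ⟨c, d⟩ (⟨h1, h2⟩ | ⟨h1, h2⟩ | ⟨h1, h2⟩)
    · exact Or.inl ⟨h1.symm, h2.symm⟩
    · exact Or.inr (Or.inl ⟨h1.symm, h2.symm⟩)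
    · exact Or.inr (Or.inr ⟨h1.symm, h2.symm⟩)
  loopless := by
    refine ⟨?_⟩
    rintro ⟨a, b⟩ (⟨_, h2⟩ | ⟨_, h2⟩ | ⟨h1, _⟩)
    exacts [H.loopless.irrefl b h2, G.loopless.irrefl a h2, G.loopless.irrefl a h1]

instance {α β : Type*} (G : SimpleGraph α) (H : SimpleGraph β)
    [DecidableEq α] [DecidableEq β] [DecidableRel G.Adj] [DecidableRel H.Adj] :
    DecidableRel (G.strongProd H).Adj :=
  fun _ _ => inferInstanceAs (Decidable (_ ∨ _ ∨ _))

section Hypergraph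
variable {V : Type*} [DecidableEq V]

/-- Lazy burning closure on a hypergraph given by its edge set. -/
inductive LazyBurned (E : Finset (Finset V)) (B : Set V) : V → Prop
  | init (v : V) (hv : v ∈ B) : LazyBurned E B v
  | spread (v : V) (h : Finset V) (hE : h ∈ E) (hcard : 2 ≤ h.card) (hv : v ∈ h)
      (hall : ∀ u ∈ h, u ≠ v → LazyBurned E B u) : LazyBurned E B v

def IsLazyBurningSet (E : Finset (Finset V)) (B : Set V) : Prop := ∀ v, LazyBurned E B v

noncomputable def lazyBurningNumber (E : Finset (Finset V)) : ℕ :=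
  sInf {n | ∃ B : Set V, B.ncard = n ∧ IsLazyBurningSet E B}

/-- one round of propagation in hypergraph burning -/
def hSpread (E : Finset (Finset V)) (S : Set V) : Set V :=
  S ∪ {v | ∃ h ∈ E, 2 ≤ h.card ∧ v ∈ h ∧ ∀ u ∈ h, u ≠ v → u ∈ S}

/-- burned vertices after t rounds of the (round-based) hypergraph burning process -/
def hBurnedAt (E : Finset (Finset V)) {k : ℕ} (s : Fin k → V) : ℕ → Set V
  | 0 => ∅
  | t + 1 => hSpread E (hBurnedAt E s t) ∪ {v | ∃ ht : t < k, v = s ⟨t, ht⟩}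

noncomputable def hBurningNumber (E : Finset (Finset V)) : ℕ :=
  sInf {k | ∃ s : Fin k → V,
    (∀ t : Fin k, s t ∉ hBurnedAt E s (t : ℕ)) ∧ hBurnedAt E s k = Set.univ}

/-- incidence graph of a hypergraph -/
def IG (E : Finset (Finset V)) : SimpleGraph (V ⊕ {h // h ∈ E}) where
  Adj x y := (∃ v h, x = Sum.inl v ∧ y = Sum.inr h ∧ v ∈ (h : Finset V)) ∨
    (∃ v h, x = Sum.inr h ∧ y = Sum.inl v ∧ v ∈ (h : Finset V))
  symm := by
    refine ⟨?_⟩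
    rintro x y (⟨v, h, rfl, rfl, hm⟩ | ⟨v, h, rfl, rfl, hm⟩)
    · exact Or.inr ⟨v, h, rfl, rfl, hm⟩
    · exact Or.inl ⟨v, h, rfl, rfl, hm⟩
  loopless := by
    refine ⟨?_⟩
    rintro x (⟨v, h, rfl, he, hm⟩ | ⟨v, h, rfl, he, hm⟩) <;> simp at he

/-- connectivity relation of a hypergraph -/
def hconn (E : Finset (Finset V)) : V → V → Prop :=
  Relation.ReflTransGen (fun u v => ∃ h ∈ E, u ∈ h ∧ v ∈ h)

end Hypergraph

open SimpleGraph in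
/-- Projection: distance in `G` of first coordinates is at most distance in the
strong product. -/
lemma proj_edist_le {α β : Type*} (G : SimpleGraph α) (H : SimpleGraph β)
    (x y : α × β) : G.edist x.1 y.1 ≤ (G.strongProd H).edist x y := by
  by_cases h : (G.strongProd H).edist x y = ⊤
  · simp [h]
  · obtain ⟨w, hw⟩ := SimpleGraph.exists_walk_of_edist_ne_top h
    rw [← hw]
    clear hw h
    induction w with
    | nil => simp [SimpleGraph.edist_self]
    | @cons u v z hadj p ih =>
      rw [SimpleGraph.Walk.length_cons]
      push_cast
      rcases hadj with ⟨h1, _⟩ | ⟨_, h1⟩ | ⟨h1, _⟩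
      · rw [h1]
        exact le_trans ih (by simp [le_add_iff_nonneg_right])
      all_goals
        calc G.edist u.1 z.1 ≤ G.edist u.1 v.1 + G.edist v.1 z.1 :=
              SimpleGraph.edist_triangle
          _ ≤ 1 + G.edist v.1 z.1 := by
              gcongr
              exact le_of_eq (SimpleGraph.edist_eq_one_iff_adj.mpr h1)
          _ ≤ 1 + (p.length : ℕ∞) := by gcongr
          _ = (p.length : ℕ∞) + 1 := by ring

open SimpleGraph in
lemma lift_walk {α : Type*} (G : SimpleGraph α) (n : ℕ) :
    ∀ {u v : α} (w : G.Walk u v) (a b : Fin n), a = b ∨ w.length ≠ 0 →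
      ∃ w' : (G.strongProd (completeGraph (Fin n))).Walk (u, a) (v, b),
        w'.length = w.length := by
  intro u v w
  induction w with
  | nil =>
    intro a b hab
    rcases hab with rfl | h
    · exact ⟨SimpleGraph.Walk.nil, rfl⟩
    · simp at h
  | @cons u u' v hadj p ih =>
    intro a b _
    by_cases hp : p.length = 0
    · have huv : u' = v := SimpleGraph.Walk.eq_of_length_eq_zero hp
      subst huv
      have hadj' : (G.strongProd (completeGraph (Fin n))).Adj (u, a) (u', b) := by
        by_cases hab : a = b
        · exact Or.inr (Or.inl ⟨hab, hadj⟩)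
        · exact Or.inr (Or.inr ⟨hadj, hab⟩)
      exact ⟨SimpleGraph.Walk.cons hadj' (SimpleGraph.Walk.nil), by simp [hp]⟩
    · obtain ⟨w', hw'⟩ := ih a b (Or.inr hp)
      have hadj' : (G.strongProd (completeGraph (Fin n))).Adj (u, a) (u', a) :=
        Or.inr (Or.inl ⟨rfl, hadj⟩)
      exact ⟨SimpleGraph.Walk.cons hadj' w', by simp [hw']⟩

open SimpleGraph in
lemma lift_edist {α : Type*} (G : SimpleGraph α) (n : ℕ) (u v : α) (a b : Fin n)
    (h : a = b ∨ u ≠ v) :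
    (G.strongProd (completeGraph (Fin n))).edist (u, a) (v, b) ≤ G.edist u v := by
  by_cases htop : G.edist u v = ⊤
  · simp [htop]
  obtain ⟨w, hw⟩ := SimpleGraph.exists_walk_of_edist_ne_top htop
  have hlen : a = b ∨ w.length ≠ 0 := by
    rcases h with h | h
    · exact Or.inl h
    · exact Or.inr fun h0 => h (SimpleGraph.Walk.eq_of_length_eq_zero h0)
  obtain ⟨w', hw'⟩ := lift_walk G n w a b hlen
  calc (G.strongProd (completeGraph (Fin n))).edist (u, a) (v, b) ≤ w'.length :=
        SimpleGraph.edist_le w'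
    _ = (w.length : ℕ∞) := by rw [hw']
    _ = G.edist u v := hw

open SimpleGraph in
/-- Symmetrize the ordered distance condition into the burning-sequence form. -/
lemma symmD {α : Type*} (G : SimpleGraph α) {t : ℕ} (s : Fin t → α)
    (D : ∀ i j : Fin t, (i : ℕ) < (j : ℕ) →
        ((((j : ℕ) - (i : ℕ) : ℕ)) : ℕ∞) ≤ G.edist (s i) (s j)) :
    ∀ i j : Fin t, i ≠ j →
      ((((i : ℕ) : ℤ) - ((j : ℕ) : ℤ)).natAbs : ℕ∞) ≤ G.edist (s i) (s j) := by
  intro i j hij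
  rcases lt_or_gt_of_ne (fun h : (i : ℕ) = (j : ℕ) => hij (Fin.ext h)) with h | h
  · have : (((i : ℕ) : ℤ) - ((j : ℕ) : ℤ)).natAbs = (j : ℕ) - (i : ℕ) := by omega
    rw [this]
    exact D i j h
  · have : (((i : ℕ) : ℤ) - ((j : ℕ) : ℤ)).natAbs = (i : ℕ) - (j : ℕ) := by omega
    rw [this, SimpleGraph.edist_comm]
    exact D j i h

open SimpleGraph in
/-- A covering by balls of radii `m-1, m-2, ..., 0` (no distance condition) yields
a genuine burning sequence of length at most `m`. -/
lemma cover_aux {α : Type*} (G : SimpleGraph α) (m : ℕ) (x : Fin m → α)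
    (hx : (⋃ l : Fin m, G.closedBall (x l) (m - 1 - (l : ℕ))) = Set.univ) :
    ∀ d t, t ≤ m → m - t ≤ d → ∀ s : Fin t → α,
      (∀ i j : Fin t, (i : ℕ) < (j : ℕ) →
          ((((j : ℕ) - (i : ℕ) : ℕ)) : ℕ∞) ≤ G.edist (s i) (s j)) →
      (∀ l : Fin m, (l : ℕ) < t → ∃ i : Fin t, (i : ℕ) ≤ (l : ℕ) ∧
          G.edist (s i) (x l) ≤ ((((l : ℕ) - (i : ℕ) : ℕ)) : ℕ∞)) →
      ∃ p, p ≤ m ∧ ∃ s' : Fin p → α, G.IsBurningSeq s' := by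
  -- the terminal case `t = m`
  have final : ∀ s : Fin m → α,
      (∀ i j : Fin m, (i : ℕ) < (j : ℕ) →
          ((((j : ℕ) - (i : ℕ) : ℕ)) : ℕ∞) ≤ G.edist (s i) (s j)) →
      (∀ l : Fin m, (l : ℕ) < m → ∃ i : Fin m, (i : ℕ) ≤ (l : ℕ) ∧
          G.edist (s i) (x l) ≤ ((((l : ℕ) - (i : ℕ) : ℕ)) : ℕ∞)) →
      G.IsBurningSeq s := by
    intro s D I
    refine ⟨symmD G s D, ?_⟩
    apply Set.eq_univ_of_forall
    intro v
    have hv : v ∈ (⋃ l : Fin m, G.closedBall (x l) (m - 1 - (l : ℕ))) := hx ▸ Set.mem_univ v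
    obtain ⟨l, hl⟩ := Set.mem_iUnion.mp hv
    obtain ⟨i, hil, hdi⟩ := I l l.isLt
    refine Set.mem_iUnion.mpr ⟨i, ?_⟩
    have hlm : (l : ℕ) < m := l.isLt
    calc G.edist (s i) v ≤ G.edist (s i) (x l) + G.edist (x l) v :=
          SimpleGraph.edist_triangle
      _ ≤ (((l : ℕ) - (i : ℕ) : ℕ) : ℕ∞) + ((m - 1 - (l : ℕ) : ℕ) : ℕ∞) := add_le_add hdi hl
      _ = ((m - 1 - (i : ℕ) : ℕ) : ℕ∞) := by
          rw [← Nat.cast_add]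
          congr 1
          omega
  intro d
  induction d with
  | zero =>
    intro t ht hd s D I
    have : t = m := by omega
    subst this
    exact ⟨t, le_rfl, s, final s D I⟩
  | succ d ih =>
    intro t ht hd s D I
    rcases eq_or_lt_of_le ht with rfl | htm
    · exact ⟨t, le_rfl, s, final s D I⟩
    -- t < m
    by_cases hcov : (⋃ i : Fin t, G.closedBall (s i) (t - 1 - (i : ℕ))) = Set.univ
    · exact ⟨t, le_of_lt htm, s, symmD G s D, hcov⟩
    · have hex : ∃ v, v ∉ (⋃ i : Fin t, G.closedBall (s i) (t - 1 - (i : ℕ))) := by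
        by_contra hc
        push_neg at hc
        exact hcov (Set.eq_univ_of_forall hc)
      obtain ⟨v, hv⟩ := hex
      set xt := x ⟨t, htm⟩ with hxt_def
      have hnew : ∃ newv, newv ∉ (⋃ i : Fin t, G.closedBall (s i) (t - 1 - (i : ℕ))) ∧
          (xt ∉ (⋃ i : Fin t, G.closedBall (s i) (t - 1 - (i : ℕ))) → newv = xt) := by
        by_cases hxt : xt ∈ (⋃ i : Fin t, G.closedBall (s i) (t - 1 - (i : ℕ)))
        · exact ⟨v, hv, fun h => absurd hxt h⟩
        · exact ⟨xt, hxt, fun _ => rfl⟩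
      obtain ⟨newv, hnew1, hnew2⟩ := hnew
      set s' : Fin (t + 1) → α := fun j => if h : (j : ℕ) < t then s ⟨j, h⟩ else newv
        with hs'_def
      have hs'lt : ∀ (j : Fin (t + 1)) (h : (j : ℕ) < t), s' j = s ⟨j, h⟩ := by
        intro j h; simp [hs'_def, h]
      have hs'last : ∀ (j : Fin (t + 1)), ¬ (j : ℕ) < t → s' j = newv := by
        intro j h; simp [hs'_def, h]
      have D' : ∀ i j : Fin (t + 1), (i : ℕ) < (j : ℕ) →
          ((((j : ℕ) - (i : ℕ) : ℕ)) : ℕ∞) ≤ G.edist (s' i) (s' j) := by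
        intro i j hij
        have hi : (i : ℕ) < t := by omega
        rw [hs'lt i hi]
        by_cases hj : (j : ℕ) < t
        · rw [hs'lt j hj]
          exact D ⟨i, hi⟩ ⟨j, hj⟩ hij
        · have hjt : (j : ℕ) = t := by omega
          rw [hs'last j hj]
          have hball : newv ∉ G.closedBall (s ⟨i, hi⟩) (t - 1 - (i : ℕ)) := by
            intro hmem
            exact hnew1 (Set.mem_iUnion.mpr ⟨⟨i, hi⟩, hmem⟩)
          have hlt : ((t - 1 - (i : ℕ) : ℕ) : ℕ∞) < G.edist (s ⟨i, hi⟩) newv :=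
            lt_of_not_ge hball
          have := Order.add_one_le_of_lt hlt
          have harit : (j : ℕ) - (i : ℕ) = (t - 1 - (i : ℕ)) + 1 := by omega
          rw [harit]
          calc (((t - 1 - (i : ℕ)) + 1 : ℕ) : ℕ∞)
              = ((t - 1 - (i : ℕ) : ℕ) : ℕ∞) + 1 := by push_cast; ring
            _ ≤ G.edist (s ⟨i, hi⟩) newv := this
      have I' : ∀ l : Fin m, (l : ℕ) < t + 1 → ∃ i : Fin (t + 1), (i : ℕ) ≤ (l : ℕ) ∧
          G.edist (s' i) (x l) ≤ ((((l : ℕ) - (i : ℕ) : ℕ)) : ℕ∞) := by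
        intro l hl
        by_cases hlt : (l : ℕ) < t
        · obtain ⟨i, hil, hdi⟩ := I l hlt
          have hi2 := i.isLt
          refine ⟨⟨(i : ℕ), by omega⟩, by simpa using hil, ?_⟩
          rw [hs'lt ⟨(i : ℕ), by omega⟩ (by simpa using hi2)]
          simpa using hdi
        · have hlt' : (l : ℕ) = t := by omega
          have hlx : x l = xt := by
            rw [hxt_def]
            congr 1
            exact Fin.ext (by simp [hlt'])
          by_cases hxtmem : xt ∈ (⋃ i : Fin t, G.closedBall (s i) (t - 1 - (i : ℕ)))
          · obtain ⟨i, hi⟩ := Set.mem_iUnion.mp hxtmem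
            have hi2 := i.isLt
            have hdix : G.edist (s i) (x l) ≤ ((t - 1 - (i : ℕ) : ℕ) : ℕ∞) := by
              rw [hlx]; exact hi
            refine ⟨⟨(i : ℕ), by omega⟩, ?_, ?_⟩
            · show (i : ℕ) ≤ (l : ℕ)
              omega
            have hv1 : s' ⟨(i : ℕ), by omega⟩ = s i := by
              rw [hs'lt ⟨(i : ℕ), by omega⟩ (by simpa using hi2)]
            rw [hv1]
            show G.edist (s i) (x l) ≤ (((l : ℕ) - (i : ℕ) : ℕ) : ℕ∞)
            exact le_trans hdix (Nat.cast_le.mpr (by omega))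
          · refine ⟨⟨t, by omega⟩, by omega, ?_⟩
            rw [hs'last ⟨t, by omega⟩ (by simp), hnew2 hxtmem, hlx]
            simp [SimpleGraph.edist_self]
      exact ih (t + 1) (by omega) (by omega) s' D' I'

/-- If `G` has an optimal burning sequence whose last source is redundant, then
`b(G ⊠ K_n) = b(G)` for all `n`. -/
theorem stmt14 {α : Type*} [Fintype α] (G : SimpleGraph α) (k : ℕ)
    (hk : G.burningNumber = k) (s : Fin k → α) (hs : G.IsBurningSeq s)
    (hred : (⋃ l ∈ {l : Fin k | (l : ℕ) < k - 1},
        G.closedBall (s l) (k - 1 - (l : ℕ))) = Set.univ) :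
    ∀ n : ℕ, 1 ≤ n →
      (G.strongProd (SimpleGraph.completeGraph (Fin n))).burningNumber = G.burningNumber := by
  intro n hn
  set P := G.strongProd (SimpleGraph.completeGraph (Fin n)) with hP
  set c : Fin n := ⟨0, hn⟩ with hc
  -- upper bound: lift the given sequence
  set s' : Fin k → α × Fin n := fun l => (s l, c) with hs'
  have hseq : P.IsBurningSeq s' := by
    constructor
    · intro i j hij
      exact le_trans (hs.1 i j hij) (proj_edist_le G _ (s' i) (s' j))
    · apply Set.eq_univ_of_forall
      rintro ⟨v, b⟩
      have hv : v ∈ ⋃ l ∈ {l : Fin k | (l : ℕ) < k - 1},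
          G.closedBall (s l) (k - 1 - (l : ℕ)) := hred ▸ Set.mem_univ v
      obtain ⟨l, hl, hvl⟩ := Set.mem_iUnion₂.mp hv
      have hl' : (l : ℕ) < k - 1 := hl
      refine Set.mem_iUnion.mpr ⟨l, ?_⟩
      show P.edist (s l, c) (v, b) ≤ ((k - 1 - (l : ℕ) : ℕ) : ℕ∞)
      have hvl' : G.edist (s l) v ≤ ((k - 1 - (l : ℕ) : ℕ) : ℕ∞) := hvl
      by_cases hbc : c = b
      · exact le_trans (lift_edist G n (s l) v c b (Or.inl hbc)) hvl'
      · by_cases hsv : s l = v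
        · subst hsv
          have hadj : P.Adj (s l, c) (s l, b) := Or.inl ⟨rfl, hbc⟩
          calc P.edist (s l, c) (s l, b) ≤ 1 :=
                le_of_eq (SimpleGraph.edist_eq_one_iff_adj.mpr hadj)
            _ ≤ ((k - 1 - (l : ℕ) : ℕ) : ℕ∞) := by
                have h1 : 1 ≤ k - 1 - (l : ℕ) := by omega
                exact_mod_cast Nat.cast_le.mpr h1
        · exact le_trans (lift_edist G n (s l) v c b (Or.inr hsv)) hvl'
  have hub : P.burningNumber ≤ k := Nat.sInf_le ⟨s', hseq⟩
  -- lower bound: project an optimal sequence of the product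
  have hne : {m | ∃ t : Fin m → α × Fin n, P.IsBurningSeq t}.Nonempty := ⟨k, s', hseq⟩
  set m := P.burningNumber with hm
  have hmem : m ∈ {m | ∃ t : Fin m → α × Fin n, P.IsBurningSeq t} :=
    Nat.sInf_mem hne
  obtain ⟨t, ht⟩ := hmem
  have hcover : (⋃ l : Fin m, G.closedBall ((t l).1) (m - 1 - (l : ℕ))) = Set.univ := by
    apply Set.eq_univ_of_forall
    intro v
    have hvm : (v, c) ∈ ⋃ l : Fin m, P.closedBall (t l) (m - 1 - (l : ℕ)) :=
      ht.2 ▸ Set.mem_univ _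
    obtain ⟨l, hl⟩ := Set.mem_iUnion.mp hvm
    refine Set.mem_iUnion.mpr ⟨l, ?_⟩
    exact le_trans (proj_edist_le G _ (t l) (v, c)) hl
  obtain ⟨p, hpm, s'', hs''⟩ := cover_aux G m (fun l => (t l).1) hcover m 0
    (Nat.zero_le m) (by omega) (fun i => i.elim0)
    (fun i => i.elim0) (fun l hl => absurd hl (Nat.not_lt_zero _))
  have hlb : G.burningNumber ≤ p := Nat.sInf_le ⟨s'', hs''⟩
  omega
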